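/- Let f₊(t) = a₃t³ + a₂t² + a₁⁺t + a₀⁺ and f₋(t) = a₃t³ + a₂t² + a₁⁻t + a₀⁻ be cubic polynomials with the same leading and quadratic coefficients, a₃ > 0 and a₁⁺ > a₁⁻, and set ε₀ = √((a₁⁺ − a₁⁻)/(12a₃)). Then for ε > 0, the inequalities f₊′(u+ε) − f₋′(u−ε) − 2ε·f₊″(u+ε) ≥ 0 and f₊′(u+ε) − f₋′(u−ε) − 2ε·f₋″(u−ε) ≥ 0 hold for every u ∈ ℝ if and only if ε ≤ ε₀; indeed the two left-hand sides are identically equal to (a₁⁺ − a₁⁻) − 12a₃ε² and (a₁⁺ − a₁⁻) + 12a₃ε², respectively. Consequently, for ε ≤ ε₀ the function B(x₁,x₂) = ((ε+x₂)/(2ε))·f₊(x₁−x₂+ε) + ((ε−x₂)/(2ε))·f₋(x₁−x₂−ε) is diagonally concave on all of Ω_ε. -/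

import Mathlib

open Set

noncomputable section

/-- The horizontal strip `Ω_ε = ℝ × [-ε, ε]`. -/
def strip (ε : ℝ) : Set (ℝ × ℝ) := {x : ℝ × ℝ | -ε ≤ x.2 ∧ x.2 ≤ ε}

/-- Diagonal concavity: concavity along every segment parallel to `(1,1)` or `(1,-1)`
contained in the set. -/
def DiagConcaveOn (S : Set (ℝ × ℝ)) (G : ℝ × ℝ → ℝ) : Prop :=
  ∀ a b : ℝ × ℝ, a ∈ S → b ∈ S →
    (b.1 - a.1 = b.2 - a.2 ∨ b.1 - a.1 = -(b.2 - a.2)) →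
    segment ℝ a b ⊆ S →
    ∀ θ : ℝ, 0 ≤ θ → θ ≤ 1 →
      θ * G a + (1 - θ) * G b ≤ G (θ • a + (1 - θ) • b)

/-- A cubic polynomial. -/
def cubic (a₃ a₂ a₁ a₀ : ℝ) : ℝ → ℝ := fun t => a₃ * t ^ 3 + a₂ * t ^ 2 + a₁ * t + a₀

lemma deriv_cubic' (a₃ a₂ a₁ a₀ : ℝ) :
    deriv (cubic a₃ a₂ a₁ a₀) = fun t => 3 * a₃ * t ^ 2 + 2 * a₂ * t + a₁ := by
  funext t
  have h1 : HasDerivAt (fun x : ℝ => a₃ * x ^ 3) (a₃ * (3 * t ^ 2)) t := by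
    simpa using (hasDerivAt_pow 3 t).const_mul a₃
  have h2 : HasDerivAt (fun x : ℝ => a₂ * x ^ 2) (a₂ * (2 * t)) t := by
    simpa using (hasDerivAt_pow 2 t).const_mul a₂
  have h3 : HasDerivAt (fun x : ℝ => a₁ * x) (a₁ * 1) t := by
    simpa using (hasDerivAt_id t).const_mul a₁
  have h := (((h1.add h2).add h3).add_const a₀).deriv
  unfold cubic
  exact h.trans (by ring)

lemma deriv_quad' (b₂ b₁ b₀ : ℝ) :
    deriv (fun t : ℝ => b₂ * t ^ 2 + b₁ * t + b₀) = fun t => 2 * b₂ * t + b₁ := by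
  funext t
  have h2 : HasDerivAt (fun x : ℝ => b₂ * x ^ 2) (b₂ * (2 * t)) t := by
    simpa using (hasDerivAt_pow 2 t).const_mul b₂
  have h3 : HasDerivAt (fun x : ℝ => b₁ * x) (b₁ * 1) t := by
    simpa using (hasDerivAt_id t).const_mul b₁
  have h := ((h2.add h3).add_const b₀).deriv
  exact h.trans (by ring)

/-- For cubic boundary data with equal leading and quadratic coefficients and `a₁⁺ > a₁⁻`,
the right simple-foliation concavity conditions hold everywhere iff `ε ≤ ε₀`; the two
left-hand sides are identically `(a₁⁺-a₁⁻) ∓ 12 a₃ ε²`. -/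
theorem cubic_equal_quadratic_simple_foliation
    (a₃ a₂ a1p a1m a0p a0m : ℝ) (ha₃ : 0 < a₃) (ha₁ : a1m < a1p)
    (ε : ℝ) (hε : 0 < ε) :
    (∀ u : ℝ,
      deriv (cubic a₃ a₂ a1p a0p) (u + ε) - deriv (cubic a₃ a₂ a1m a0m) (u - ε) -
          2 * ε * deriv (deriv (cubic a₃ a₂ a1p a0p)) (u + ε) =
        (a1p - a1m) - 12 * a₃ * ε ^ 2 ∧
      deriv (cubic a₃ a₂ a1p a0p) (u + ε) - deriv (cubic a₃ a₂ a1m a0m) (u - ε) -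
          2 * ε * deriv (deriv (cubic a₃ a₂ a1m a0m)) (u - ε) =
        (a1p - a1m) + 12 * a₃ * ε ^ 2) ∧
    ((∀ u : ℝ,
      0 ≤ deriv (cubic a₃ a₂ a1p a0p) (u + ε) - deriv (cubic a₃ a₂ a1m a0m) (u - ε) -
          2 * ε * deriv (deriv (cubic a₃ a₂ a1p a0p)) (u + ε) ∧
      0 ≤ deriv (cubic a₃ a₂ a1p a0p) (u + ε) - deriv (cubic a₃ a₂ a1m a0m) (u - ε) -
          2 * ε * deriv (deriv (cubic a₃ a₂ a1m a0m)) (u - ε)) ↔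
      ε ≤ Real.sqrt ((a1p - a1m) / (12 * a₃))) ∧
    (ε ≤ Real.sqrt ((a1p - a1m) / (12 * a₃)) →
      DiagConcaveOn (strip ε)
        (fun x : ℝ × ℝ =>
          ((ε + x.2) / (2 * ε)) * cubic a₃ a₂ a1p a0p (x.1 - x.2 + ε) +
          ((ε - x.2) / (2 * ε)) * cubic a₃ a₂ a1m a0m (x.1 - x.2 - ε))) := by
  have h12pos : (0:ℝ) < 12 * a₃ := by linarith
  have hpt1 : ∀ u : ℝ,
      deriv (cubic a₃ a₂ a1p a0p) (u + ε) - deriv (cubic a₃ a₂ a1m a0m) (u - ε) -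
          2 * ε * deriv (deriv (cubic a₃ a₂ a1p a0p)) (u + ε) =
        (a1p - a1m) - 12 * a₃ * ε ^ 2 ∧
      deriv (cubic a₃ a₂ a1p a0p) (u + ε) - deriv (cubic a₃ a₂ a1m a0m) (u - ε) -
          2 * ε * deriv (deriv (cubic a₃ a₂ a1m a0m)) (u - ε) =
        (a1p - a1m) + 12 * a₃ * ε ^ 2 := by
    intro u
    constructor <;> · simp only [deriv_cubic', deriv_quad']; ring
  -- equivalence between ε ≤ ε₀ and the coefficient inequality
  have hsqrt : ε ≤ Real.sqrt ((a1p - a1m) / (12 * a₃)) ↔ 12 * a₃ * ε ^ 2 ≤ a1p - a1m := by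
    rw [Real.le_sqrt' hε, le_div_iff₀ h12pos]
    constructor <;> intro h <;> nlinarith
  refine ⟨hpt1, ?_, ?_⟩
  · constructor
    · intro h
      have h0 := (h 0).1
      rw [(hpt1 0).1] at h0
      rw [hsqrt]
      linarith
    · intro h u
      rw [hsqrt] at h
      obtain ⟨e1, e2⟩ := hpt1 u
      rw [e1, e2]
      constructor
      · linarith
      · nlinarith [sq_nonneg ε]
  · intro hle
    rw [hsqrt] at hle
    intro a b ha hb hdir hseg θ hθ0 hθ1
    obtain ⟨ha1, ha2⟩ := ha
    obtain ⟨hb1', hb2⟩ := hb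
    simp only [Prod.fst_add, Prod.snd_add, Prod.smul_fst, Prod.smul_snd, smul_eq_mul]
    rcases hdir with hd | hd
    · -- direction (1,1): the function is affine along the segment
      have hb1 : b.1 = a.1 - a.2 + b.2 := by linarith
      rw [hb1, ← sub_nonneg]
      apply le_of_eq
      unfold cubic
      field_simp
      ring
    · -- direction (1,-1)
      have hb1 : b.1 = a.1 + a.2 - b.2 := by linarith
      rw [hb1, ← sub_nonneg]
      have key : (((ε + (θ * a.2 + (1 - θ) * b.2)) / (2 * ε)) *
            cubic a₃ a₂ a1p a0p ((θ * a.1 + (1 - θ) * (a.1 + a.2 - b.2)) -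
              (θ * a.2 + (1 - θ) * b.2) + ε) +
          ((ε - (θ * a.2 + (1 - θ) * b.2)) / (2 * ε)) *
            cubic a₃ a₂ a1m a0m ((θ * a.1 + (1 - θ) * (a.1 + a.2 - b.2)) -
              (θ * a.2 + (1 - θ) * b.2) - ε))
        - (θ * (((ε + a.2) / (2 * ε)) * cubic a₃ a₂ a1p a0p (a.1 - a.2 + ε) +
                ((ε - a.2) / (2 * ε)) * cubic a₃ a₂ a1m a0m (a.1 - a.2 - ε)) +
           (1 - θ) * (((ε + b.2) / (2 * ε)) * cubic a₃ a₂ a1p a0p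
                ((a.1 + a.2 - b.2) - b.2 + ε) +
                ((ε - b.2) / (2 * ε)) * cubic a₃ a₂ a1m a0m ((a.1 + a.2 - b.2) - b.2 - ε)))
        = (2 * θ * (1 - θ) * (a.2 - b.2) ^ 2 *
            ((a1p - a1m) - 4 * a₃ * ε * ((θ * a.2 + (1 - θ) * b.2) + a.2 + b.2))) /
          (2 * ε) := by
        unfold cubic
        field_simp
        ring
      rw [key]
      have hm : θ * a.2 + (1 - θ) * b.2 ≤ ε := by nlinarith
      have hbr : 0 ≤ (a1p - a1m) - 4 * a₃ * ε * ((θ * a.2 + (1 - θ) * b.2) + a.2 + b.2) := by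
        nlinarith [mul_pos ha₃ hε]
      have hnum : 0 ≤ 2 * θ * (1 - θ) * (a.2 - b.2) ^ 2 *
          ((a1p - a1m) - 4 * a₃ * ε * ((θ * a.2 + (1 - θ) * b.2) + a.2 + b.2)) := by
        have h1 : 0 ≤ 2 * θ * (1 - θ) := by nlinarith
        positivity
      positivity
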